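/- Let n ≥ 1. The n+1 elements w = (0,−1;1,0) and y(p^j) = (1,0;p^j,1) for j = 1,…,n form a complete and irredundant set of representatives for the double cosets K₀(pⁿ)\K/K₀(pⁿ): every g ∈ K = GL₂(ℤₚ) lies in K₀(pⁿ)·h·K₀(pⁿ) for exactly one h among w, y(p), y(p²), …, y(pⁿ). -/
import Mathlib


/-- `K = GL₂(ℤₚ)`, realized as the set of 2×2 matrices over `ℤ_[p]` with unit determinant. -/
def Kfull (p : ℕ) [Fact p.Prime] : Set (Matrix (Fin 2) (Fin 2) ℤ_[p]) :=
  {g | IsUnit g.det}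

/-- `K₀(pⁿ) = {(a,b;c,d) ∈ K : c ∈ pⁿℤₚ}`. -/
def K0 (p : ℕ) [Fact p.Prime] (n : ℕ) : Set (Matrix (Fin 2) (Fin 2) ℤ_[p]) :=
  {g | IsUnit g.det ∧ (p : ℤ_[p]) ^ n ∣ g 1 0}

/-- `w = (0,−1;1,0)`. -/
noncomputable def wMat (p : ℕ) [Fact p.Prime] : Matrix (Fin 2) (Fin 2) ℤ_[p] := !![0, -1; 1, 0]

/-- `y(t) = (1,0;t,1)`. -/
noncomputable def yMat (p : ℕ) [Fact p.Prime] (t : ℤ_[p]) : Matrix (Fin 2) (Fin 2) ℤ_[p] := !![1, 0; t, 1]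

variable {p : ℕ} [Fact p.Prime]

lemma DC.not_isUnit_iff {x : ℤ_[p]} : ¬ IsUnit x ↔ (p : ℤ_[p]) ∣ x := by
  rw [PadicInt.isUnit_iff, ← PadicInt.norm_lt_one_iff_dvd]
  exact ⟨fun h => lt_of_le_of_ne (PadicInt.norm_le_one x) h, fun h => ne_of_lt h⟩

lemma DC.unit_of_sub {a b : ℤ_[p]} (h : IsUnit (a - b)) (hb : ¬ IsUnit b) : IsUnit a := by
  by_contra ha
  rw [DC.not_isUnit_iff] at ha hb
  exact (DC.not_isUnit_iff.mpr (dvd_sub ha hb)) h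

lemma DC.K0_units {n : ℕ} (hn : 1 ≤ n) {k : Matrix (Fin 2) (Fin 2) ℤ_[p]} (hk : k ∈ K0 p n) :
    IsUnit (k 0 0) ∧ IsUnit (k 1 1) := by
  obtain ⟨hdet, hdvd⟩ := hk
  have hp10 : (p : ℤ_[p]) ∣ k 1 0 := (dvd_pow_self _ (by omega)).trans hdvd
  have h2 : ¬ IsUnit (k 0 1 * k 1 0) := DC.not_isUnit_iff.mpr (hp10.mul_left _)
  rw [Matrix.det_fin_two] at hdet
  have h3 : IsUnit (k 0 0 * k 1 1) := DC.unit_of_sub hdet h2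
  exact ⟨isUnit_of_mul_isUnit_left h3, isUnit_of_mul_isUnit_right h3⟩

lemma DC.dvd_mul_left {n j : ℕ} (hn : 1 ≤ n) (hj : j ≤ n) {k g : Matrix (Fin 2) (Fin 2) ℤ_[p]}
    (hk : k ∈ K0 p n) : (p : ℤ_[p]) ^ j ∣ (k * g) 1 0 ↔ (p : ℤ_[p]) ^ j ∣ g 1 0 := by
  have h1 : (k * g) 1 0 = k 1 0 * g 0 0 + k 1 1 * g 1 0 := by
    rw [Matrix.mul_apply, Fin.sum_univ_two]
  have h2 : (p : ℤ_[p]) ^ j ∣ k 1 0 * g 0 0 := ((pow_dvd_pow _ hj).trans hk.2).mul_right _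
  rw [h1, dvd_add_right h2]
  exact (DC.K0_units hn hk).2.dvd_mul_left

lemma DC.dvd_mul_right {n j : ℕ} (hn : 1 ≤ n) (hj : j ≤ n) {k g : Matrix (Fin 2) (Fin 2) ℤ_[p]}
    (hk : k ∈ K0 p n) : (p : ℤ_[p]) ^ j ∣ (g * k) 1 0 ↔ (p : ℤ_[p]) ^ j ∣ g 1 0 := by
  have h1 : (g * k) 1 0 = g 1 0 * k 0 0 + g 1 1 * k 1 0 := by
    rw [Matrix.mul_apply, Fin.sum_univ_two]
  have h2 : (p : ℤ_[p]) ^ j ∣ g 1 1 * k 1 0 := (((pow_dvd_pow _ hj).trans hk.2).mul_left _)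
  rw [h1, dvd_add_left h2]
  exact (DC.K0_units hn hk).1.dvd_mul_right

lemma DC.key {n : ℕ} (hn : 1 ≤ n) (g : Matrix (Fin 2) (Fin 2) ℤ_[p]) (i : Fin (n + 1))
    (h : ∃ k₁ ∈ K0 p n, ∃ k₂ ∈ K0 p n,
        g = k₁ * (if (i : ℕ) = 0 then wMat p else yMat p ((p : ℤ_[p]) ^ (i : ℕ))) * k₂)
    {j : ℕ} (hj : j ≤ n) : ((p : ℤ_[p]) ^ j ∣ g 1 0 ↔ j ≤ (i : ℕ)) := by
  obtain ⟨k₁, hk₁, k₂, hk₂, rfl⟩ := h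
  rw [DC.dvd_mul_right hn hj hk₂, DC.dvd_mul_left hn hj hk₁]
  have hrep : (if (i : ℕ) = 0 then wMat p else yMat p ((p : ℤ_[p]) ^ (i : ℕ))) 1 0
      = (p : ℤ_[p]) ^ (i : ℕ) := by
    split
    · rename_i h0; rw [h0, pow_zero]; simp [wMat]
    · simp [yMat]
  rw [hrep]
  exact pow_dvd_pow_iff (NeZero.ne _) (DC.not_isUnit_iff.mpr dvd_rfl)


lemma DC.decomp0 {n : ℕ} {g : Matrix (Fin 2) (Fin 2) ℤ_[p]} (hg : IsUnit g.det)
    (hc : IsUnit (g 1 0)) :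
    ∃ k₁ ∈ K0 p n, ∃ k₂ ∈ K0 p n, g = k₁ * wMat p * k₂ := by
  obtain ⟨v, hv⟩ := hc
  set b : ℤ_[p] := ↑v⁻¹ with hb
  have hbc : b * g 1 0 = 1 := by rw [hb, ← hv]; exact v.inv_mul
  set a : ℤ_[p] := g 0 0 * b with ha
  refine ⟨!![1, a; 0, 1], ⟨by simp [Matrix.det_fin_two_of], by simp⟩,
    !![g 1 0, g 1 1; 0, a * g 1 1 - g 0 1], ⟨?_, by simp⟩, ?_⟩
  · have hdet : (!![g 1 0, g 1 1; 0, a * g 1 1 - g 0 1]).det = g.det := by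
      rw [Matrix.det_fin_two_of, Matrix.det_fin_two, ha]
      linear_combination (g 0 0 * g 1 1) * hbc
    rw [hdet]; exact hg
  · have h1 : !![(1 : ℤ_[p]), a; 0, 1] * wMat p = !![a, -1; 1, 0] := by
      rw [wMat, Matrix.mul_fin_two]; norm_num
    rw [h1, Matrix.mul_fin_two]
    ext i j
    fin_cases i <;> fin_cases j <;> simp [ha]
    all_goals linear_combination (-(g 0 0)) * hbc

lemma DC.decompn {n : ℕ} {g : Matrix (Fin 2) (Fin 2) ℤ_[p]} (hg : IsUnit g.det)
    (hc : (p : ℤ_[p]) ^ n ∣ g 1 0) :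
    ∃ k₁ ∈ K0 p n, ∃ k₂ ∈ K0 p n, g = k₁ * yMat p ((p : ℤ_[p]) ^ n) * k₂ := by
  refine ⟨g, ⟨hg, hc⟩, yMat p (-((p : ℤ_[p]) ^ n)), ⟨?_, ?_⟩, ?_⟩
  · rw [yMat, Matrix.det_fin_two_of]; norm_num
  · show (p : ℤ_[p]) ^ n ∣ (yMat p _) 1 0
    simp [yMat]
  · have : yMat p ((p : ℤ_[p]) ^ n) * yMat p (-((p : ℤ_[p]) ^ n)) = 1 := by
      rw [yMat, yMat, Matrix.mul_fin_two, Matrix.one_fin_two]; norm_num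
    rw [mul_assoc, this, mul_one]

lemma DC.decompj {n j : ℕ} {g : Matrix (Fin 2) (Fin 2) ℤ_[p]} (hg : IsUnit g.det)
    (hA : IsUnit (g 0 0)) {u : ℤ_[p]ˣ} (hc : g 1 0 = (p : ℤ_[p]) ^ j * ↑u) :
    ∃ k₁ ∈ K0 p n, ∃ k₂ ∈ K0 p n, g = k₁ * yMat p ((p : ℤ_[p]) ^ j) * k₂ := by
  obtain ⟨vA, hvA⟩ := hA
  set w0 : ℤ_[p]ˣ := u * vA⁻¹ with hw0
  set s : ℤ_[p] := (p : ℤ_[p]) ^ j * ↑w0 with hs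
  refine ⟨!![(↑w0⁻¹ : ℤ_[p]), 0; 0, 1], ⟨?_, by simp⟩,
    !![↑w0 * g 0 0, ↑w0 * g 0 1; 0, g 1 1 - s * g 0 1], ⟨?_, by simp⟩, ?_⟩
  · rw [Matrix.det_fin_two_of]; simpa using w0⁻¹.isUnit
  · have hdet : (!![(↑w0 : ℤ_[p]) * g 0 0, ↑w0 * g 0 1; 0, g 1 1 - s * g 0 1]).det
        = ↑w0 * g.det := by
      rw [Matrix.det_fin_two_of, Matrix.det_fin_two, hs, hw0, hc]
      have h1 : (↑vA⁻¹ : ℤ_[p]) * ↑vA = 1 := vA.inv_mul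
      rw [← hvA, Units.val_mul]
      linear_combination (-((↑u : ℤ_[p])^2 * ↑vA⁻¹ * (p:ℤ_[p])^j * g 0 1)) * h1
    rw [hdet]
    exact w0.isUnit.mul hg
  · have h1 : !![(↑w0⁻¹ : ℤ_[p]), 0; 0, 1] * yMat p ((p : ℤ_[p]) ^ j)
        = !![(↑w0⁻¹ : ℤ_[p]), 0; (p : ℤ_[p]) ^ j, 1] := by
      rw [yMat, Matrix.mul_fin_two]; norm_num
    rw [h1, Matrix.mul_fin_two]
    have hiv : (↑w0⁻¹ : ℤ_[p]) * ↑w0 = 1 := w0.inv_mul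
    have hAv : (↑vA⁻¹ : ℤ_[p]) * ↑vA = 1 := vA.inv_mul
    ext i jj
    fin_cases i <;> fin_cases jj <;> simp [hs, hw0, hc, ← hvA]
    · have huv : (↑u⁻¹ : ℤ_[p]) * ↑u = 1 := u.inv_mul
      linear_combination (-(g 0 1 * ↑vA * (↑vA⁻¹:ℤ_[p]))) * huv + (-(g 0 1)) * hAv
    · ring

/-- The `n+1` elements `w, y(p), y(p²), …, y(pⁿ)` form a complete and irredundant set of
representatives for the double cosets `K₀(pⁿ)\K/K₀(pⁿ)`: every `g ∈ K` lies in
`K₀(pⁿ)·h·K₀(pⁿ)` for exactly one `h` among them. -/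
theorem stmt0 (p n : ℕ) [Fact p.Prime] (hn : 1 ≤ n) :
    ∀ g ∈ Kfull p, ∃! i : Fin (n + 1),
      ∃ k₁ ∈ K0 p n, ∃ k₂ ∈ K0 p n,
        g = k₁ * (if (i : ℕ) = 0 then wMat p else yMat p ((p : ℤ_[p]) ^ (i : ℕ))) * k₂ := by
  intro g hg
  classical
  have main : ∃ i : Fin (n + 1), ∃ k₁ ∈ K0 p n, ∃ k₂ ∈ K0 p n,
      g = k₁ * (if (i : ℕ) = 0 then wMat p else yMat p ((p : ℤ_[p]) ^ (i : ℕ))) * k₂ := by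
    by_cases h0 : (p : ℤ_[p]) ∣ g 1 0
    · by_cases hN : (p : ℤ_[p]) ^ n ∣ g 1 0
      · refine ⟨⟨n, by omega⟩, ?_⟩
        have hi : ((⟨n, by omega⟩ : Fin (n + 1)) : ℕ) = n := rfl
        rw [hi, if_neg (by omega : ¬ n = 0)]
        exact DC.decompn hg hN
      · have hex : ∃ k, ¬ (p : ℤ_[p]) ^ k ∣ g 1 0 := ⟨n, hN⟩
        set m := Nat.find hex with hm
        have hms : ¬ (p : ℤ_[p]) ^ m ∣ g 1 0 := Nat.find_spec hex
        have hmn : m ≤ n := Nat.find_le hN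
        have hm2 : 2 ≤ m := by
          rcases Nat.lt_or_ge m 2 with h | h
          · interval_cases m
            · exact absurd (by simp : (p : ℤ_[p]) ^ 0 ∣ g 1 0) hms
            · exact absurd (by simpa using h0 : (p : ℤ_[p]) ^ 1 ∣ g 1 0) hms
          · exact h
        set j := m - 1 with hj
        have pj : (p : ℤ_[p]) ^ j ∣ g 1 0 := not_not.mp (Nat.find_min hex (by omega))
        have hnot : ¬ (p : ℤ_[p]) ^ (j + 1) ∣ g 1 0 := by
          have : j + 1 = m := by omega
          rw [this]; exact hms
        obtain ⟨x, hx⟩ := pj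
        have hxu : IsUnit x := by
          by_contra hxu
          rw [DC.not_isUnit_iff] at hxu
          exact hnot (by rw [hx, pow_succ]; exact mul_dvd_mul (dvd_refl _) hxu)
        obtain ⟨u, hu⟩ := hxu
        have hA : IsUnit (g 0 0) := by
          have hdet : IsUnit g.det := hg
          rw [Matrix.det_fin_two] at hdet
          have h2 : ¬ IsUnit (g 0 1 * g 1 0) := DC.not_isUnit_iff.mpr (h0.mul_left _)
          exact isUnit_of_mul_isUnit_left (DC.unit_of_sub hdet h2)
        refine ⟨⟨j, by omega⟩, ?_⟩
        have hi : ((⟨j, by omega⟩ : Fin (n + 1)) : ℕ) = j := rfl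
        rw [hi, if_neg (by omega : ¬ j = 0)]
        exact DC.decompj hg hA (u := u) (by rw [hx, hu])
    · have hc : IsUnit (g 1 0) := by
        by_contra h
        exact h0 (DC.not_isUnit_iff.mp h)
      refine ⟨0, ?_⟩
      rw [show ((0 : Fin (n + 1)) : ℕ) = 0 from rfl, if_pos rfl]
      exact DC.decomp0 hg hc
  obtain ⟨i, hi⟩ := main
  refine ⟨i, hi, fun i' hi' => ?_⟩
  have h1 : (i' : ℕ) ≤ (i : ℕ) :=
    (DC.key hn g i hi i'.is_le).mp ((DC.key hn g i' hi' i'.is_le).mpr le_rfl)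
  have h2 : (i : ℕ) ≤ (i' : ℕ) :=
    (DC.key hn g i' hi' i.is_le).mp ((DC.key hn g i hi i.is_le).mpr le_rfl)
  exact Fin.ext (le_antisymm h1 h2)
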